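/- arXiv:1606.05237 — 6 statements merged into one kernel-verified Lean document; each statement's English description precedes it below -/
import Mathlib

section
/- For 0 < α < β with m-1 < α < m (m ∈ ℕ), the Riemann-Liouville fractional difference satisfies Δ^α k^β(n) = k^{β-α}(n+m) for all n ∈ ℕ₀. -/
noncomputable def kk (β : ℝ) (n : ℕ) : ℝ :=
  Real.Gamma (β + n) / (Real.Gamma β * Real.Gamma (n + 1))

def fwd (u : ℕ → ℝ) : ℕ → ℝ := fun n => u (n + 1) - u n

/-- Fractional sum of order `γ > 0`. -/
noncomputable def fsum (γ : ℝ) (u : ℕ → ℝ) : ℕ → ℝ :=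
  fun n => ∑ j ∈ Finset.range (n + 1), kk γ (n - j) * u j

lemma kk_zero (δ : ℝ) (hδ : 0 < δ) : kk δ 0 = 1 := by
  have h := (Real.Gamma_pos_of_pos hδ).ne'
  simp [kk, Real.Gamma_one, h]

lemma kk_rec (δ : ℝ) (hδ : 0 < δ) (i : ℕ) :
    ((i : ℝ) + 1) * kk δ (i + 1) = (δ + i) * kk δ i := by
  have h1 : δ + (i : ℝ) ≠ 0 := by positivity
  have h2 : (i : ℝ) + 1 ≠ 0 := by positivity
  have e1 : Real.Gamma (δ + ((i : ℕ) + 1 : ℕ)) = (δ + i) * Real.Gamma (δ + i) := by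
    push_cast
    rw [show δ + ((i : ℝ) + 1) = (δ + i) + 1 by ring, Real.Gamma_add_one h1]
  have e2 : Real.Gamma (((i : ℕ) + 1 : ℕ) + 1) = ((i : ℝ) + 1) * Real.Gamma (i + 1) := by
    push_cast
    rw [Real.Gamma_add_one h2]
  simp only [kk, e1, e2]
  rw [show Real.Gamma δ * (((i:ℝ) + 1) * Real.Gamma (i + 1))
      = ((i:ℝ)+1) * (Real.Gamma δ * Real.Gamma (i+1)) by ring,
    mul_div_assoc, mul_comm ((i:ℝ)+1), mul_assoc, div_mul_eq_mul_div,
    mul_comm (Real.Gamma (δ + i)) ((i:ℝ)+1), mul_div_mul_left _ _ h2]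

lemma conv_kk (γ β : ℝ) (hγ : 0 < γ) (hβ : 0 < β) (n : ℕ) :
    ∑ j ∈ Finset.range (n + 1), kk γ (n - j) * kk β j = kk (γ + β) n := by
  induction n with
  | zero => simp [kk_zero γ hγ, kk_zero β hβ, (kk_zero (γ+β) (by positivity))]
  | succ n ih =>
    have hn1 : ((n : ℝ) + 1) ≠ 0 := by positivity
    have key : ((n : ℝ) + 1) * ∑ j ∈ Finset.range (n + 1 + 1), kk γ (n + 1 - j) * kk β j
        = (γ + β + n) * ∑ j ∈ Finset.range (n + 1), kk γ (n - j) * kk β j := by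
      rw [Finset.mul_sum, Finset.mul_sum]
      have split : ∀ j ∈ Finset.range (n + 1 + 1),
          ((n : ℝ) + 1) * (kk γ (n + 1 - j) * kk β j)
          = ((n + 1 - j : ℕ) : ℝ) * kk γ (n + 1 - j) * kk β j
            + (j : ℝ) * (kk γ (n + 1 - j) * kk β j) := by
        intro j hj
        have hj' : j ≤ n + 1 := Nat.lt_succ_iff.mp (Finset.mem_range.mp hj)
        have : ((n + 1 - j : ℕ) : ℝ) = (n : ℝ) + 1 - j := by
          push_cast [hj'] ; ring
        rw [this]; ring
      rw [Finset.sum_congr rfl split, Finset.sum_add_distrib]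
      have hA : ∑ j ∈ Finset.range (n + 1 + 1),
          ((n + 1 - j : ℕ) : ℝ) * kk γ (n + 1 - j) * kk β j
          = ∑ j ∈ Finset.range (n + 1), (γ + ((n - j : ℕ) : ℝ)) * kk γ (n - j) * kk β j := by
        rw [Finset.sum_range_succ]
        simp only [Nat.sub_self, Nat.cast_zero, zero_mul]
        rw [add_zero]
        refine Finset.sum_congr rfl fun j hj => ?_
        have hj' : j ≤ n := Nat.lt_succ_iff.mp (Finset.mem_range.mp hj)
        have h1 : n + 1 - j = (n - j) + 1 := by omega
        rw [h1]
        congr 1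
        push_cast
        exact kk_rec γ hγ (n - j)
      have hB : ∑ j ∈ Finset.range (n + 1 + 1),
          (j : ℝ) * (kk γ (n + 1 - j) * kk β j)
          = ∑ j ∈ Finset.range (n + 1), kk γ (n - j) * ((β + j) * kk β j) := by
        rw [Finset.sum_range_succ']
        simp only [Nat.cast_zero, zero_mul, add_zero]
        refine Finset.sum_congr rfl fun j hj => ?_
        have h1 : n + 1 - (j + 1) = n - j := by omega
        rw [h1]
        have h2 : ((j + 1 : ℕ) : ℝ) * kk β (j + 1) = (β + j) * kk β j := by
          push_cast; exact kk_rec β hβ j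
        push_cast
        calc ((j:ℝ) + 1) * (kk γ (n - j) * kk β (j + 1))
            = kk γ (n - j) * (((j:ℝ) + 1) * kk β (j + 1)) := by ring
          _ = kk γ (n - j) * ((β + j) * kk β j) := by rw [← h2]; push_cast; ring
      rw [hA, hB, ← Finset.sum_add_distrib]
      refine Finset.sum_congr rfl fun j hj => ?_
      have hj' : j ≤ n := Nat.lt_succ_iff.mp (Finset.mem_range.mp hj)
      have : ((n - j : ℕ) : ℝ) = (n : ℝ) - j := by push_cast [hj']; ring
      rw [this]; ring
    have key2 : ((n : ℝ) + 1) * kk (γ + β) (n + 1) = (γ + β + n) * kk (γ + β) n :=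
      kk_rec (γ + β) (by positivity) n
    rw [ih] at key
    have := key.trans key2.symm
    exact mul_left_cancel₀ hn1 this

lemma fwd_kk (δ : ℝ) (hδ : 1 < δ) (k : ℕ) : fwd (kk δ) k = kk (δ - 1) (k + 1) := by
  have hδ0 : (0:ℝ) < δ := lt_trans one_pos hδ
  have hδ1 : (0:ℝ) < δ - 1 := by linarith
  have hG1 : Real.Gamma (δ - 1) ≠ 0 := (Real.Gamma_pos_of_pos hδ1).ne'
  have hGk : Real.Gamma ((k : ℝ) + 1) ≠ 0 :=
    (Real.Gamma_pos_of_pos (by positivity)).ne'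
  have hk1 : ((k : ℝ) + 1) ≠ 0 := by positivity
  have hδk : δ + (k : ℝ) ≠ 0 := by positivity
  have hd1 : δ - 1 ≠ 0 := ne_of_gt hδ1
  have eG : Real.Gamma δ = (δ - 1) * Real.Gamma (δ - 1) := by
    have := Real.Gamma_add_one hd1
    rw [sub_add_cancel] at this
    exact this
  have e1 : Real.Gamma (δ + ((k : ℕ) + 1 : ℕ)) = (δ + k) * Real.Gamma (δ + k) := by
    push_cast
    rw [show δ + ((k : ℝ) + 1) = (δ + k) + 1 by ring, Real.Gamma_add_one hδk]
  have e2 : Real.Gamma (((k : ℕ) + 1 : ℕ) + 1) = ((k : ℝ) + 1) * Real.Gamma (k + 1) := by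
    push_cast
    rw [Real.Gamma_add_one hk1]
  have e3 : Real.Gamma ((δ - 1) + ((k : ℕ) + 1 : ℕ)) = Real.Gamma (δ + k) := by
    push_cast
    ring_nf
  simp only [fwd, kk, e1, e2, e3, eG]
  field_simp
  ring

lemma fwd_shift (j : ℕ) : ∀ (u : ℕ → ℝ) (n : ℕ),
    fwd^[j] (fun k => u (k + 1)) n = fwd^[j] u (n + 1) := by
  induction j with
  | zero => intro u n; simp
  | succ j ih =>
    intro u n
    rw [Function.iterate_succ_apply, Function.iterate_succ_apply]
    have : fwd (fun k => u (k + 1)) = fun k => fwd u (k + 1) := by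
      funext k; simp [fwd]
    rw [this, ih]

lemma iter_fwd_kk (j : ℕ) : ∀ δ : ℝ, (j : ℝ) < δ → ∀ n : ℕ,
    fwd^[j] (kk δ) n = kk (δ - j) (n + j) := by
  induction j with
  | zero => intro δ _ n; simp
  | succ j ih =>
    intro δ hδ n
    have hδ1 : 1 < δ := by
      have : (0 : ℝ) ≤ (j : ℝ) := Nat.cast_nonneg j
      push_cast at hδ; linarith
    rw [Function.iterate_succ_apply]
    have h1 : fwd (kk δ) = fun k => kk (δ - 1) (k + 1) := funext (fwd_kk δ hδ1)
    rw [h1, fwd_shift j (kk (δ - 1)) n, ih (δ - 1) (by push_cast at hδ ⊢; linarith) (n + 1)]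
    congr 1
    · push_cast; ring
    · omega

theorem stmt5 (α β : ℝ) (m : ℕ) (hm : 1 ≤ m) (h0 : 0 < α) (hαβ : α < β)
    (h1 : (m : ℝ) - 1 < α) (h2 : α < m) (n : ℕ) :
    fwd^[m] (fsum ((m : ℝ) - α) (kk β)) n = kk (β - α) (n + m) := by
  have hγ : 0 < (m : ℝ) - α := by linarith
  have hβ0 : 0 < β := lt_trans h0 hαβ
  have hfs : fsum ((m : ℝ) - α) (kk β) = kk (((m : ℝ) - α) + β) := by
    funext k
    exact conv_kk ((m : ℝ) - α) β hγ hβ0 k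
  rw [hfs, iter_fwd_kk m (((m : ℝ) - α) + β) (by linarith) n]
  congr 1
  ring
end

section
/- Let 1 < α < 2 and u : ℕ₀ → X a sequence in a Banach space X. Then the Caputo and Riemann-Liouville fractional differences satisfy: C Δ^α u(n) = Δ^α u(n) - k^{2-α}(n+1)[u(1) - 2u(0)] - k^{2-α}(n+2)u(0) for all n ∈ ℕ₀. -/
variable {X : Type*} [NormedAddCommGroup X] [NormedSpace ℝ X]

/-- Fractional sum of order `γ` of a vector-valued sequence. -/
noncomputable def fsumX (γ : ℝ) (u : ℕ → X) : ℕ → X :=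
  fun n => ∑ j ∈ Finset.range (n + 1), kk γ (n - j) • u j

/-- Second order forward difference. -/
def delta2 (u : ℕ → X) : ℕ → X := fun n => u (n + 2) - (2 : ℝ) • u (n + 1) + u n

theorem stmt6 (α : ℝ) (hα1 : 1 < α) (hα2 : α < 2) (u : ℕ → X) (n : ℕ) :
    fsumX (2 - α) (delta2 u) n =
      delta2 (fsumX (2 - α) u) n
        - kk (2 - α) (n + 1) • (u 1 - (2 : ℝ) • u 0)
        - kk (2 - α) (n + 2) • u 0 := by
  set γ := 2 - α with hγ
  have h2 : fsumX γ u (n + 2) =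
      (∑ j ∈ Finset.range (n + 1), kk γ (n - j) • u (j + 2))
        + kk γ (n + 1) • u 1 + kk γ (n + 2) • u 0 := by
    show (∑ j ∈ Finset.range (n + 2 + 1), kk γ (n + 2 - j) • u j) = _
    rw [Finset.sum_range_succ', Finset.sum_range_succ']
    have : ∀ j ∈ Finset.range (n + 1),
        kk γ (n + 2 - (j + 1 + 1)) • u (j + 1 + 1) = kk γ (n - j) • u (j + 2) := by
      intro j _
      rw [show n + 2 - (j + 1 + 1) = n - j from by omega]
    rw [Finset.sum_congr rfl this]
    norm_num
  have h1 : fsumX γ u (n + 1) =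
      (∑ j ∈ Finset.range (n + 1), kk γ (n - j) • u (j + 1)) + kk γ (n + 1) • u 0 := by
    show (∑ j ∈ Finset.range (n + 1 + 1), kk γ (n + 1 - j) • u j) = _
    rw [Finset.sum_range_succ']
    have : ∀ j ∈ Finset.range (n + 1),
        kk γ (n + 1 - (j + 1)) • u (j + 1) = kk γ (n - j) • u (j + 1) := by
      intro j _
      rw [show n + 1 - (j + 1) = n - j from by omega]
    rw [Finset.sum_congr rfl this]
    norm_num
  have hL : fsumX γ (delta2 u) n =
      (∑ j ∈ Finset.range (n + 1), kk γ (n - j) • u (j + 2))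
        - (2 : ℝ) • (∑ j ∈ Finset.range (n + 1), kk γ (n - j) • u (j + 1))
        + ∑ j ∈ Finset.range (n + 1), kk γ (n - j) • u j := by
    show (∑ j ∈ Finset.range (n + 1), kk γ (n - j) • delta2 u j) = _
    simp only [delta2, smul_add, smul_sub, smul_comm (kk γ _) (2 : ℝ),
      Finset.sum_add_distrib, Finset.sum_sub_distrib, Finset.smul_sum]
  have hC : fsumX γ u n = ∑ j ∈ Finset.range (n + 1), kk γ (n - j) • u j := rfl
  show fsumX γ (delta2 u) n =
      (fsumX γ u (n + 2) - (2 : ℝ) • fsumX γ u (n + 1) + fsumX γ u n)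
        - kk γ (n + 1) • (u 1 - (2 : ℝ) • u 0) - kk γ (n + 2) • u 0
  rw [hL, h1, h2, hC]
  module
end

section
/- For m, n ∈ ℕ₀ and t ≥ 0, the m-th forward difference in n of the Poisson kernel satisfies Δ^m p_n(t) = (-1)^m p_{n+m}^{(m)}(t), i.e., ∑_{j=0}^m C(m,j)(-1)^{m-j} p_{n+j}(t) = (-1)^m (d/dt)^m [e^{-t} t^{n+m}/(n+m)!]. -/
noncomputable def poi (n : ℕ) (t : ℝ) : ℝ := Real.exp (-t) * t ^ n / n.factorial

lemma poi_smooth (k : ℕ) : ContDiff ℝ ⊤ (poi k) := by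
  unfold poi
  exact ((Real.contDiff_exp.comp contDiff_neg).mul (contDiff_id.pow k)).div_const _

lemma deriv_poi (k : ℕ) : deriv (poi (k + 1)) = fun t => poi k t - poi (k + 1) t := by
  funext t
  have he : HasDerivAt (fun t : ℝ => Real.exp (-t)) (-Real.exp (-t)) t := by
    simpa [Function.comp_def] using (Real.hasDerivAt_exp (-t)).comp t (hasDerivAt_neg t)
  have hp : HasDerivAt (fun t : ℝ => t ^ (k + 1)) ((k + 1) * t ^ k) t := by
    simpa using hasDerivAt_pow (k + 1) t
  have h := (he.mul hp).div_const ((k + 1).factorial : ℝ)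
  have h' : HasDerivAt (poi (k + 1)) (poi k t - poi (k + 1) t) t := by
    refine h.congr_deriv ?_
    unfold poi
    have h0 : ((k + 1).factorial : ℝ) ≠ 0 := Nat.cast_ne_zero.2 (k + 1).factorial_ne_zero
    have h1 : (k.factorial : ℝ) ≠ 0 := Nat.cast_ne_zero.2 k.factorial_ne_zero
    rw [Nat.factorial_succ]
    push_cast
    field_simp
    ring
  exact h'.deriv

lemma iteratedDeriv_sub' {m : ℕ} {f g : ℝ → ℝ} (hf : ContDiff ℝ ⊤ f) (hg : ContDiff ℝ ⊤ g) :
    iteratedDeriv m (fun t => f t - g t) = fun t => iteratedDeriv m f t - iteratedDeriv m g t := by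
  funext t
  rw [← iteratedDerivWithin_univ, ← iteratedDerivWithin_univ, ← iteratedDerivWithin_univ]
  exact iteratedDerivWithin_sub (Set.mem_univ t) uniqueDiffOn_univ
    ((hf.of_le le_top).contDiffWithinAt) ((hg.of_le le_top).contDiffWithinAt)

lemma binom_step (m : ℕ) (a : ℕ → ℝ) :
    ∑ j ∈ Finset.range (m + 2), ((m + 1).choose j : ℝ) * (-1) ^ j * a j =
      ∑ j ∈ Finset.range (m + 1), (m.choose j : ℝ) * (-1) ^ j * a j -
        ∑ j ∈ Finset.range (m + 1), (m.choose j : ℝ) * (-1) ^ j * a (j + 1) := by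
  rw [Finset.sum_range_succ' _ (m + 1), Finset.sum_range_succ' (fun j => (m.choose j : ℝ) * (-1) ^ j * a j) m]
  have hsplit : ∀ j ∈ Finset.range (m + 1),
      ((m + 1).choose (j + 1) : ℝ) * (-1) ^ (j + 1) * a (j + 1) =
        (m.choose j : ℝ) * (-1) ^ (j + 1) * a (j + 1) +
          (m.choose (j + 1) : ℝ) * (-1) ^ (j + 1) * a (j + 1) := by
    intro j _
    rw [Nat.choose_succ_succ]
    push_cast
    ring
  rw [Finset.sum_congr rfl hsplit, Finset.sum_add_distrib]
  have h2 : ∑ j ∈ Finset.range (m + 1), (m.choose (j + 1) : ℝ) * (-1) ^ (j + 1) * a (j + 1) =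
      ∑ j ∈ Finset.range m, (m.choose (j + 1) : ℝ) * (-1) ^ (j + 1) * a (j + 1) := by
    rw [Finset.sum_range_succ, Nat.choose_succ_self]
    simp
  rw [h2]
  have h3 : ∑ j ∈ Finset.range (m + 1), (m.choose j : ℝ) * (-1) ^ (j + 1) * a (j + 1) =
      -∑ j ∈ Finset.range (m + 1), (m.choose j : ℝ) * (-1) ^ j * a (j + 1) := by
    rw [← Finset.sum_neg_distrib]
    exact Finset.sum_congr rfl fun j _ => by ring
  rw [h3]
  simp
  ring

lemma key (m : ℕ) : ∀ (n : ℕ) (t : ℝ),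
    iteratedDeriv m (poi (n + m)) t =
      ∑ j ∈ Finset.range (m + 1), (m.choose j : ℝ) * (-1) ^ j * poi (n + j) t := by
  induction m with
  | zero => intro n t; simp [iteratedDeriv_zero]
  | succ m ih =>
    intro n t
    rw [iteratedDeriv_succ']
    have hd : deriv (poi (n + (m + 1))) = fun s => poi (n + m) s - poi (n + m + 1) s := by
      rw [show n + (m + 1) = (n + m) + 1 from rfl]
      exact deriv_poi (n + m)
    rw [hd, iteratedDeriv_sub' (poi_smooth _) (poi_smooth _)]
    have h1 := ih n t
    have h2 := ih (n + 1) t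
    rw [show (n + 1) + m = n + m + 1 by ring] at h2
    simp only [h1, h2]
    rw [binom_step m (fun j => poi (n + j) t)]
    congr 1
    refine Finset.sum_congr rfl fun j _ => ?_
    rw [show n + 1 + j = n + (j + 1) by ring]

theorem stmt11 (m n : ℕ) (t : ℝ) (ht : 0 ≤ t) :
    ∑ j ∈ Finset.range (m + 1), (m.choose j : ℝ) * (-1 : ℝ) ^ (m - j) * poi (n + j) t =
      (-1 : ℝ) ^ m * iteratedDeriv m (poi (n + m)) t := by
  rw [key m n t, Finset.mul_sum]
  refine Finset.sum_congr rfl fun j hj => ?_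
  have hjm : j ≤ m := Nat.lt_succ_iff.mp (Finset.mem_range.mp hj)
  have hsign : (-1 : ℝ) ^ (m - j) = (-1) ^ m * (-1) ^ j := by
    rw [← pow_add, show m + j = (m - j) + 2 * j by omega, pow_add, pow_mul]
    simp
  rw [hsign]
  ring
end

section
/- The Poisson transformation is multiplicative with respect to convolution: for a ∈ L¹(ℝ₊) and ψ ∈ L¹(ℝ₊; X), P(a∗ψ)(n) = (P(a) * P(ψ))(n) for all n ∈ ℕ₀, where ∗ is the continuous convolution on ℝ₊ and * the finite discrete convolution. -/
open MeasureTheory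

lemma poi_nonneg (n : ℕ) {t : ℝ} (ht : 0 ≤ t) : 0 ≤ poi n t := by
  unfold poi
  positivity

lemma poi_le_one (n : ℕ) {t : ℝ} (ht : 0 ≤ t) : poi n t ≤ 1 := by
  unfold poi
  rw [div_le_one (by positivity), Real.exp_neg]
  rw [inv_mul_le_iff₀ (Real.exp_pos t)]
  have hs := Real.sum_le_exp_of_nonneg ht (n+1)
  have h2 : t ^ n / n.factorial ≤ Real.exp t := by
    refine le_trans ?_ hs
    refine Finset.single_le_sum (f := fun i => t ^ i / i.factorial) ?_ (Finset.self_mem_range_succ n)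
    intro i _; positivity
  rw [div_le_iff₀ (by positivity)] at h2
  nlinarith [Real.exp_pos t]

lemma poi_continuous (n : ℕ) : Continuous (poi n) := by
  unfold poi
  fun_prop

lemma poi_measurable (n : ℕ) : Measurable (poi n) := (poi_continuous n).measurable

lemma poi_add (n : ℕ) (u s : ℝ) :
    poi n (s + u) = ∑ j ∈ Finset.range (n + 1), poi (n - j) u * poi j s := by
  unfold poi
  rw [add_pow, Finset.mul_sum, Finset.sum_div]
  refine Finset.sum_congr rfl fun j hj => ?_
  have hjn : j ≤ n := Nat.lt_succ_iff.mp (Finset.mem_range.mp hj)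
  have hfac : (n.choose j : ℝ) * (j.factorial : ℝ) * ((n - j).factorial : ℝ) = n.factorial := by
    exact_mod_cast congrArg (Nat.cast (R := ℝ)) (Nat.choose_mul_factorial_mul_factorial hjn)
  have h1 : (j.factorial : ℝ) ≠ 0 := by positivity
  have h2 : ((n - j).factorial : ℝ) ≠ 0 := by positivity
  have h3 : (n.factorial : ℝ) ≠ 0 := by positivity
  rw [neg_add, Real.exp_add]
  field_simp
  linear_combination (s ^ j * u ^ (n - j)) * hfac

lemma shift_integrableOn {E : Type*} [NormedAddCommGroup E] {f : ℝ → E} (s : ℝ)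
    (hf : IntegrableOn f (Set.Ioi 0)) : IntegrableOn (fun t => f (t - s)) (Set.Ioi s) := by
  rw [← integrable_indicator_iff measurableSet_Ioi] at hf ⊢
  have h := hf.comp_sub_right s
  refine h.congr ?_
  refine Filter.Eventually.of_forall fun t => ?_
  by_cases ht : s < t
  · simp [Set.indicator_of_mem (by simpa using ht : t ∈ Set.Ioi s),
      Set.indicator_of_mem (by simpa using ht : t - s ∈ Set.Ioi (0:ℝ))]
  · simp [Set.indicator_of_notMem (by simpa using ht : t ∉ Set.Ioi s),
      Set.indicator_of_notMem (by simpa using ht : t - s ∉ Set.Ioi (0:ℝ))]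

lemma shift_setIntegral {E : Type*} [NormedAddCommGroup E] [NormedSpace ℝ E]
    (f : ℝ → E) (s : ℝ) :
    ∫ t in Set.Ioi s, f (t - s) = ∫ u in Set.Ioi 0, f u := by
  have hemb : MeasurableEmbedding (fun x : ℝ => x + s) :=
    (MeasurableEquiv.addRight s).measurableEmbedding
  have h := (measurePreserving_add_right (volume : Measure ℝ) s).setIntegral_preimage_emb
      hemb (fun t => f (t - s)) (Set.Ioi s)
  have hpre : (fun x : ℝ => x + s) ⁻¹' (Set.Ioi s) = Set.Ioi 0 := by
    ext x; simp
  rw [hpre] at h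
  rw [← h]
  apply setIntegral_congr_fun measurableSet_Ioi
  intro x _
  simp

lemma key_s14 (X : Type*) [NormedAddCommGroup X] [NormedSpace ℝ X] [CompleteSpace X]
    (a : ℝ → ℝ) (ψ : ℝ → X) (hsa : StronglyMeasurable a) (hsψ : StronglyMeasurable ψ)
    (ha : IntegrableOn a (Set.Ioi 0)) (hψ : IntegrableOn ψ (Set.Ioi 0)) (n : ℕ) :
    (∫ t in Set.Ioi (0 : ℝ), poi n t • (∫ s in (0 : ℝ)..t, a (t - s) • ψ s)) =
      ∑ j ∈ Finset.range (n + 1),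
        (∫ t in Set.Ioi (0 : ℝ), poi (n - j) t * a t) •
          (∫ t in Set.Ioi (0 : ℝ), poi j t • ψ t) := by
  set μ : Measure ℝ := volume.restrict (Set.Ioi 0) with hμ
  set F : ℝ × ℝ → X := fun p => if p.1 < p.2 then (poi n p.2 * a (p.2 - p.1)) • ψ p.1 else 0
    with hF
  -- measurability
  have hFsm : StronglyMeasurable F := by
    refine StronglyMeasurable.ite (measurableSet_lt measurable_fst measurable_snd) ?_
      stronglyMeasurable_const
    exact (((poi_measurable n).comp measurable_snd).mul
      (hsa.measurable.comp (measurable_snd.sub measurable_fst))).stronglyMeasurable.smul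
      (hsψ.comp_measurable measurable_fst)
  -- sections description
  have hsecEq : ∀ s : ℝ, (fun t => F (s, t)) =
      Set.indicator (Set.Ioi s) (fun t => (poi n t * a (t - s)) • ψ s) := by
    intro s
    funext t
    by_cases h : s < t
    · simp [hF, h, Set.indicator_of_mem (Set.mem_Ioi.mpr h)]
    · simp [hF, h, Set.indicator_of_notMem (fun hc => h (Set.mem_Ioi.mp hc))]
  have hres : ∀ s : ℝ, 0 < s → μ.restrict (Set.Ioi s) = volume.restrict (Set.Ioi s) := by
    intro s hs
    rw [hμ, Measure.restrict_restrict measurableSet_Ioi, Set.Ioi_inter_Ioi]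
    congr 1
    simp [max_eq_left hs.le]
  -- integrability of sections
  have hsec : ∀ s ∈ Set.Ioi (0:ℝ), Integrable (fun t => F (s, t)) μ := by
    intro s hs
    rw [hsecEq s, integrable_indicator_iff measurableSet_Ioi]
    rw [IntegrableOn, hres s hs]
    have h1 : IntegrableOn (fun t => a (t - s)) (Set.Ioi s) := shift_integrableOn s ha
    have h2 : IntegrableOn (fun t => poi n t * a (t - s)) (Set.Ioi s) := by
      refine Integrable.bdd_mul h1 (c := 1) ((poi_measurable n).aestronglyMeasurable) ?_
      refine ae_restrict_of_forall_mem measurableSet_Ioi fun t ht => ?_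
      have h0t : (0:ℝ) ≤ t := le_of_lt (lt_trans hs ht)
      rw [Real.norm_eq_abs, abs_of_nonneg (poi_nonneg n h0t)]
      exact poi_le_one n h0t
    exact h2.smul_const (ψ s)
  -- bound on section integrals of norms
  have hbound : ∀ s ∈ Set.Ioi (0:ℝ),
      (∫ t, ‖F (s, t)‖ ∂μ) ≤ (∫ t in Set.Ioi (0:ℝ), |a t|) * ‖ψ s‖ := by
    intro s hs
    have h1 : IntegrableOn (fun t => a (t - s)) (Set.Ioi s) := shift_integrableOn s ha
    have heq : (fun t => ‖F (s, t)‖) =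
        Set.indicator (Set.Ioi s) (fun t => ‖(poi n t * a (t - s)) • ψ s‖) := by
      funext t
      rw [show F (s, t) = Set.indicator (Set.Ioi s)
        (fun t => (poi n t * a (t - s)) • ψ s) t from congrFun (hsecEq s) t]
      exact norm_indicator_eq_indicator_norm _ t
    rw [heq, integral_indicator measurableSet_Ioi, hres s hs]
    have hle : (∫ t in Set.Ioi s, ‖(poi n t * a (t - s)) • ψ s‖) ≤
        ∫ t in Set.Ioi s, |a (t - s)| * ‖ψ s‖ := by
      refine integral_mono_of_nonneg (Filter.Eventually.of_forall fun t => norm_nonneg _)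
        (h1.norm.mul_const _) ?_
      refine ae_restrict_of_forall_mem measurableSet_Ioi fun t ht => ?_
      have h0t : (0:ℝ) ≤ t := le_of_lt (lt_trans hs ht)
      dsimp only
      rw [norm_smul, Real.norm_eq_abs, abs_mul]
      have : |poi n t| ≤ 1 := by
        rw [abs_of_nonneg (poi_nonneg n h0t)]; exact poi_le_one n h0t
      calc |poi n t| * |a (t - s)| * ‖ψ s‖ ≤ 1 * |a (t - s)| * ‖ψ s‖ := by
            apply mul_le_mul_of_nonneg_right _ (norm_nonneg _)
            exact mul_le_mul_of_nonneg_right this (abs_nonneg _)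
        _ = |a (t - s)| * ‖ψ s‖ := by ring
    refine hle.trans ?_
    rw [integral_mul_const]
    have := shift_setIntegral (fun u => |a u|) s
    rw [this]
  -- integrability on the product
  have hFint : Integrable F (μ.prod μ) := by
    refine (integrable_prod_iff hFsm.aestronglyMeasurable).2 ⟨?_, ?_⟩
    · exact ae_restrict_of_forall_mem measurableSet_Ioi hsec
    · refine Integrable.mono' (hψ.norm.const_mul (∫ t in Set.Ioi (0:ℝ), |a t|)) ?_ ?_
      · exact (hFsm.norm.aestronglyMeasurable).integral_prod_right'
      · refine ae_restrict_of_forall_mem measurableSet_Ioi fun s hs => ?_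
        rw [Real.norm_of_nonneg (integral_nonneg fun t => norm_nonneg _)]
        exact hbound s hs
  -- Fubini
  have hswap : ∫ s, ∫ t, F (s, t) ∂μ ∂μ = ∫ t, ∫ s, F (s, t) ∂μ ∂μ :=
    integral_integral_swap (f := fun s t => F (s, t)) hFint
  -- inner integral in t-then-s order equals LHS
  have hLHS : (∫ t, ∫ s, F (s, t) ∂μ ∂μ) =
      ∫ t in Set.Ioi (0 : ℝ), poi n t • (∫ s in (0 : ℝ)..t, a (t - s) • ψ s) := by
    refine setIntegral_congr_fun measurableSet_Ioi fun t ht => ?_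
    have ht0 : (0:ℝ) < t := ht
    have h1 : (fun s => F (s, t)) =
        Set.indicator (Set.Iio t) (fun s => (poi n t * a (t - s)) • ψ s) := by
      funext s
      by_cases h : s < t
      · simp [hF, h, Set.indicator_of_mem (Set.mem_Iio.mpr h)]
      · simp [hF, h, Set.indicator_of_notMem (fun hc => h (Set.mem_Iio.mp hc))]
    rw [h1, hμ, integral_indicator measurableSet_Iio,
      Measure.restrict_restrict measurableSet_Iio]
    rw [Set.Iio_inter_Ioi]
    rw [← integral_Ioc_eq_integral_Ioo]
    rw [← intervalIntegral.integral_of_le ht0.le]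
    rw [show (fun s => (poi n t * a (t - s)) • ψ s) = fun s => poi n t • (a (t - s) • ψ s) by
      funext s; rw [mul_smul]]
    rw [intervalIntegral.integral_smul]
  -- inner integral in s-then-t order equals RHS
  have hinner : ∀ s ∈ Set.Ioi (0:ℝ), (∫ t, F (s, t) ∂μ) =
      (∑ j ∈ Finset.range (n + 1),
        (∫ t in Set.Ioi (0 : ℝ), poi (n - j) t * a t) * poi j s) • ψ s := by
    intro s hs
    rw [hsecEq s, integral_indicator measurableSet_Ioi, hres s hs]
    rw [integral_smul_const]
    congr 1
    have h2 : (fun t => poi n t * a (t - s)) = fun t => (fun u => poi n (s + u) * a u) (t - s) := by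
      funext t
      simp [add_sub_cancel]
    rw [h2, shift_setIntegral (fun u => poi n (s + u) * a u) s]
    have h3 : ∀ u : ℝ, poi n (s + u) * a u =
        ∑ j ∈ Finset.range (n + 1), (poi (n - j) u * a u) * poi j s := by
      intro u
      rw [poi_add n u s, Finset.sum_mul]
      exact Finset.sum_congr rfl fun j _ => by ring
    simp_rw [h3]
    rw [integral_finset_sum]
    · exact Finset.sum_congr rfl fun j _ => by rw [integral_mul_const]
    · intro j _
      refine Integrable.mul_const ?_ _
      refine Integrable.bdd_mul ha (c := 1) ((poi_measurable (n - j)).aestronglyMeasurable) ?_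
      refine ae_restrict_of_forall_mem measurableSet_Ioi fun t ht => ?_
      have h0t : (0:ℝ) ≤ t := le_of_lt ht
      rw [Real.norm_eq_abs, abs_of_nonneg (poi_nonneg _ h0t)]
      exact poi_le_one _ h0t
  have hpsi_int : ∀ j : ℕ, Integrable (fun s => poi j s • ψ s) μ := by
    intro j
    refine Integrable.mono' hψ.norm
      (((poi_measurable j).aestronglyMeasurable).smul hψ.aestronglyMeasurable) ?_
    refine ae_restrict_of_forall_mem measurableSet_Ioi fun s hs => ?_
    rw [norm_smul, Real.norm_eq_abs, abs_of_nonneg (poi_nonneg j (le_of_lt hs))]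
    exact mul_le_of_le_one_left (norm_nonneg _) (poi_le_one j (le_of_lt hs))
  have hRHS : (∫ s, ∫ t, F (s, t) ∂μ ∂μ) =
      ∑ j ∈ Finset.range (n + 1),
        (∫ t in Set.Ioi (0 : ℝ), poi (n - j) t * a t) •
          (∫ t in Set.Ioi (0 : ℝ), poi j t • ψ t) := by
    rw [setIntegral_congr_fun measurableSet_Ioi hinner]
    have h4 : ∀ s : ℝ, (∑ j ∈ Finset.range (n + 1),
        (∫ t in Set.Ioi (0 : ℝ), poi (n - j) t * a t) * poi j s) • ψ s =
        ∑ j ∈ Finset.range (n + 1),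
          (∫ t in Set.Ioi (0 : ℝ), poi (n - j) t * a t) • (poi j s • ψ s) := by
      intro s
      rw [Finset.sum_smul]
      exact Finset.sum_congr rfl fun j _ => by rw [mul_smul]
    simp_rw [h4]
    rw [integral_finset_sum]
    · exact Finset.sum_congr rfl fun j _ => by rw [integral_smul]
    · intro j _
      exact (hpsi_int j).smul _  -- const smul
  rw [← hLHS, ← hswap, hRHS]

lemma mp_sub_left (t : ℝ) : MeasurePreserving (fun x : ℝ => t - x) volume volume := by
  have h1 : MeasurePreserving (fun x : ℝ => -x) volume volume :=
    Measure.measurePreserving_neg volume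
  have h2 := measurePreserving_add_left (volume : Measure ℝ) t
  have := h2.comp h1
  convert this using 1
  funext x
  simp [sub_eq_add_neg]

theorem stmt14 (X : Type*) [NormedAddCommGroup X] [NormedSpace ℝ X] [CompleteSpace X]
    (a : ℝ → ℝ) (ψ : ℝ → X)
    (ha : IntegrableOn a (Set.Ioi 0)) (hψ : IntegrableOn ψ (Set.Ioi 0)) (n : ℕ) :
    (∫ t in Set.Ioi (0 : ℝ), poi n t • (∫ s in (0 : ℝ)..t, a (t - s) • ψ s)) =
      ∑ j ∈ Finset.range (n + 1),
        (∫ t in Set.Ioi (0 : ℝ), poi (n - j) t * a t) •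
          (∫ t in Set.Ioi (0 : ℝ), poi j t • ψ t) := by
  obtain ⟨a', ha'sm, ha'ae⟩ := ha.aestronglyMeasurable
  obtain ⟨ψ', hψ'sm, hψ'ae⟩ := hψ.aestronglyMeasurable
  have hNa : volume ({x | a x ≠ a' x} ∩ Set.Ioi 0) = 0 := by
    have := ha'ae
    rw [Filter.EventuallyEq, ae_iff, Measure.restrict_apply' measurableSet_Ioi] at this
    exact this
  have hNψ : volume ({x | ψ x ≠ ψ' x} ∩ Set.Ioi 0) = 0 := by
    have := hψ'ae
    rw [Filter.EventuallyEq, ae_iff, Measure.restrict_apply' measurableSet_Ioi] at this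
    exact this
  have hkey := key_s14 X a' ψ' ha'sm hψ'sm (ha.congr ha'ae) (hψ.congr hψ'ae) n
  -- RHS equality
  have hR : ∀ j : ℕ,
      (∫ t in Set.Ioi (0 : ℝ), poi (n - j) t * a t) = ∫ t in Set.Ioi (0 : ℝ), poi (n - j) t * a' t := by
    intro j
    refine integral_congr_ae (ha'ae.mono fun x hx => ?_)
    dsimp only; rw [hx]
  have hRψ : ∀ j : ℕ,
      (∫ t in Set.Ioi (0 : ℝ), poi j t • ψ t) = ∫ t in Set.Ioi (0 : ℝ), poi j t • ψ' t := by
    intro j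
    refine integral_congr_ae (hψ'ae.mono fun x hx => ?_)
    dsimp only; rw [hx]
  -- LHS equality
  have hL : (∫ t in Set.Ioi (0 : ℝ), poi n t • (∫ s in (0 : ℝ)..t, a (t - s) • ψ s)) =
      ∫ t in Set.Ioi (0 : ℝ), poi n t • (∫ s in (0 : ℝ)..t, a' (t - s) • ψ' s) := by
    refine setIntegral_congr_fun measurableSet_Ioi fun t ht => ?_
    have ht0 : (0:ℝ) < t := ht
    congr 1
    refine intervalIntegral.integral_congr_ae ?_
    have hpre : volume ((fun x : ℝ => t - x) ⁻¹' ({x | a x ≠ a' x} ∩ Set.Ioi 0)) = 0 :=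
      (mp_sub_left t).quasiMeasurePreserving.preimage_null hNa
    have hZ : volume ((fun x : ℝ => t - x) ⁻¹' ({x | a x ≠ a' x} ∩ Set.Ioi 0) ∪
        (({x | ψ x ≠ ψ' x} ∩ Set.Ioi 0) ∪ {t})) = 0 := by
      refine measure_union_null hpre (measure_union_null hNψ ?_)
      simp
    rw [← compl_mem_ae_iff] at hZ
    refine Filter.Eventually.mono hZ fun x hx hmem => ?_
    rw [Set.uIoc_of_le ht0.le] at hmem
    simp only [Set.mem_compl_iff, Set.mem_union, Set.mem_inter_iff, Set.mem_setOf_eq,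
      Set.mem_preimage, Set.mem_singleton_iff, not_or] at hx
    obtain ⟨hx1, hx2, hx3⟩ := hx
    have hxIoi : x ∈ Set.Ioi (0:ℝ) := Set.mem_Ioi.mpr hmem.1
    have hψeq : ψ x = ψ' x := by
      by_contra hc
      exact hx2 ⟨hc, hxIoi⟩
    have hxt : x < t := lt_of_le_of_ne hmem.2 hx3
    have haeq : a (t - x) = a' (t - x) := by
      by_contra hc
      exact hx1 ⟨hc, by simp [Set.mem_Ioi]; linarith⟩
    rw [hψeq, haeq]
  rw [hL, hkey]
  refine Finset.sum_congr rfl fun j _ => ?_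
  rw [hR j, hRψ j]
end

section
/- Let A be a bounded linear operator on a Banach space X with ‖A‖ < 1 and α > 0. Then the series S_α(n) = ∑_{j=0}^∞ k^{α(j+1)}(n) A^j converges in operator norm for each n ∈ ℕ₀, and S_α satisfies the resolvent equation S_α(n)x = k^α(n)x + A (k^α * S_α)(n)x for all n ∈ ℕ₀ and x ∈ X, where (k^α * S_α)(n)x = ∑_{j=0}^n k^α(n-j) S_α(j)x. -/
open Polynomial Finset

private lemma smeval_desc_real (n : ℕ) (x : ℝ) :
    (descPochhammer ℤ n).smeval x = (descPochhammer ℝ n).eval x := by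
  rw [← Polynomial.aeval_eq_smeval, Polynomial.aeval_def, ← Polynomial.eval_map,
    descPochhammer_map]

private lemma asc_add_eval (a b : ℝ) (n : ℕ) :
    (ascPochhammer ℝ n).eval (a + b) =
      ∑ j ∈ range (n + 1), (n.choose j : ℝ) *
        ((ascPochhammer ℝ j).eval a * (ascPochhammer ℝ (n - j)).eval b) := by
  have key := Ring.descPochhammer_smeval_add (R := ℝ) (r := -a) (s := -b) n (Commute.all _ _)
  simp only [smeval_desc_real] at key
  have h1 : (ascPochhammer ℝ n).eval (a + b) = (-1 : ℝ) ^ n *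
      (descPochhammer ℝ n).eval (-a + -b) := by
    have h := ascPochhammer_eval_neg_eq_descPochhammer ℝ (-a + -b) n
    rw [show -(-a + -b) = a + b by ring] at h
    exact h
  rw [h1, key, Finset.Nat.sum_antidiagonal_eq_sum_range_succ_mk, Finset.mul_sum]
  refine Finset.sum_congr rfl fun j hj => ?_
  have hjn : j ≤ n := Nat.lt_succ_iff.mp (Finset.mem_range.mp hj)
  have e1 : (descPochhammer ℝ j).eval (-a) = (-1 : ℝ) ^ j * (ascPochhammer ℝ j).eval a := by
    have h := ascPochhammer_eval_neg_eq_descPochhammer ℝ (-a) j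
    rw [neg_neg] at h
    rw [h, ← mul_assoc, ← mul_pow]; norm_num
  have e2 : (descPochhammer ℝ (n - j)).eval (-b) =
      (-1 : ℝ) ^ (n - j) * (ascPochhammer ℝ (n - j)).eval b := by
    have h := ascPochhammer_eval_neg_eq_descPochhammer ℝ (-b) (n - j)
    rw [neg_neg] at h
    rw [h, ← mul_assoc, ← mul_pow]; norm_num
  rw [e1, e2]
  have hpow : ((-1 : ℝ)) ^ n * ((-1 : ℝ) ^ j * (-1 : ℝ) ^ (n - j)) = 1 := by
    rw [← pow_add, Nat.add_sub_cancel' hjn, ← mul_pow]; norm_num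
  calc (-1 : ℝ) ^ n * (↑(n.choose j) *
        ((-1 : ℝ) ^ j * (ascPochhammer ℝ j).eval a *
          ((-1 : ℝ) ^ (n - j) * (ascPochhammer ℝ (n - j)).eval b)))
      = ((-1 : ℝ) ^ n * ((-1 : ℝ) ^ j * (-1 : ℝ) ^ (n - j))) *
        (↑(n.choose j) * ((ascPochhammer ℝ j).eval a * (ascPochhammer ℝ (n - j)).eval b)) := by
        ring
    _ = ↑(n.choose j) * ((ascPochhammer ℝ j).eval a * (ascPochhammer ℝ (n - j)).eval b) := by
        rw [hpow, one_mul]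

private lemma kk_eq_asc {β : ℝ} (hβ : 0 < β) (n : ℕ) :
    kk β n = (ascPochhammer ℝ n).eval β / (n.factorial : ℝ) := by
  have hg : ∀ m : ℕ, Real.Gamma (β + m) = (ascPochhammer ℝ m).eval β * Real.Gamma β := by
    intro m
    induction m with
    | zero => simp
    | succ m ih =>
      have hne : β + (m : ℝ) ≠ 0 := by positivity
      rw [show β + ((m + 1 : ℕ) : ℝ) = (β + m) + 1 by push_cast; ring,
        Real.Gamma_add_one hne, ih, ascPochhammer_succ_eval]
      ring
  have h0 : Real.Gamma β ≠ 0 := (Real.Gamma_pos_of_pos hβ).ne'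
  have hfac : ((n.factorial : ℝ)) ≠ 0 := Nat.cast_ne_zero.mpr n.factorial_ne_zero
  unfold kk
  rw [hg n, Real.Gamma_nat_eq_factorial]
  field_simp

private lemma kk_pos {β : ℝ} (hβ : 0 < β) (n : ℕ) : 0 < kk β n := by
  have h1 : 0 < Real.Gamma (β + n) := Real.Gamma_pos_of_pos (by positivity)
  have h2 : 0 < Real.Gamma β := Real.Gamma_pos_of_pos hβ
  have h3 : 0 < Real.Gamma ((n : ℝ) + 1) := Real.Gamma_pos_of_pos (by positivity)
  exact div_pos h1 (mul_pos h2 h3)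

private lemma kk_conv {a b : ℝ} (ha : 0 < a) (hb : 0 < b) (n : ℕ) :
    ∑ j ∈ range (n + 1), kk a (n - j) * kk b j = kk (a + b) n := by
  have hab : 0 < a + b := by linarith
  rw [kk_eq_asc hab, show a + b = b + a from add_comm a b, asc_add_eval b a, Finset.sum_div]
  refine Finset.sum_congr rfl fun j hj => ?_
  have hjn : j ≤ n := Nat.lt_succ_iff.mp (Finset.mem_range.mp hj)
  rw [kk_eq_asc ha, kk_eq_asc hb, Nat.cast_choose ℝ hjn]
  have f1 : ((j.factorial : ℝ)) ≠ 0 := Nat.cast_ne_zero.mpr j.factorial_ne_zero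
  have f2 : (((n - j).factorial : ℝ)) ≠ 0 := Nat.cast_ne_zero.mpr (n - j).factorial_ne_zero
  have f3 : ((n.factorial : ℝ)) ≠ 0 := Nat.cast_ne_zero.mpr n.factorial_ne_zero
  field_simp

private lemma asc_le {t : ℝ} (ht : 0 ≤ t) (n : ℕ) :
    (ascPochhammer ℝ n).eval t ≤ (t + n) ^ n := by
  induction n with
  | zero => simp
  | succ n ih =>
    have h2 : (0 : ℝ) ≤ t + n := by positivity
    rw [ascPochhammer_succ_eval]
    calc (ascPochhammer ℝ n).eval t * (t + n) ≤ (t + n) ^ n * (t + n) :=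
          mul_le_mul_of_nonneg_right ih h2
      _ = (t + n) ^ (n + 1) := (pow_succ _ n).symm
      _ ≤ (t + ((n + 1 : ℕ) : ℝ)) ^ (n + 1) := by
          apply pow_le_pow_left₀ h2
          push_cast; linarith

theorem stmt18 (X : Type*) [NormedAddCommGroup X] [NormedSpace ℝ X] [CompleteSpace X]
    (A : X →L[ℝ] X) (hA : ‖A‖ < 1) (α : ℝ) (hα : 0 < α) :
    (∀ n : ℕ, Summable (fun j : ℕ => kk (α * (j + 1)) n • A ^ j)) ∧
    ∀ n : ℕ, ∀ x : X,
      (∑' j : ℕ, kk (α * (j + 1)) n • A ^ j) x =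
        kk α n • x +
          A (∑ j ∈ Finset.range (n + 1),
              kk α (n - j) • (∑' i : ℕ, kk (α * (i + 1)) j • A ^ i) x) := by
  set r : ℝ := (‖A‖ + 1) / 2 with hr_def
  have hr0 : 0 < r := by have := norm_nonneg A; simp only [hr_def]; linarith
  have hr1 : r < 1 := by simp only [hr_def]; linarith
  have hAr : ‖A‖ ≤ r := by simp only [hr_def]; linarith
  have hApow : ∀ j : ℕ, ‖A ^ j‖ ≤ r ^ j := by
    intro j
    cases j with
    | zero =>
      simpa [ContinuousLinearMap.one_def] using ContinuousLinearMap.norm_id_le (E := X)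
    | succ m =>
      calc ‖A ^ (m + 1)‖ ≤ ‖A‖ ^ (m + 1) := norm_pow_le' A (Nat.succ_pos m)
        _ ≤ r ^ (m + 1) := pow_le_pow_left₀ (norm_nonneg A) hAr _
  have hsum_geo : ∀ n : ℕ, Summable (fun j : ℕ => ((j : ℝ) + 1) ^ n * r ^ j) := by
    intro n
    have h1 : Summable (fun j : ℕ => ((j : ℝ)) ^ n * r ^ j) := by
      apply summable_pow_mul_geometric_of_norm_lt_one
      rw [Real.norm_eq_abs, abs_of_nonneg hr0.le]; exact hr1
    have h2 := (summable_nat_add_iff 1).2 h1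
    have h3 := h2.mul_right r⁻¹
    refine h3.congr fun j => ?_
    push_cast
    rw [mul_assoc, pow_succ, mul_assoc, mul_inv_cancel₀ hr0.ne', mul_one]
  have Hop : ∀ n : ℕ, Summable (fun j : ℕ => kk (α * (j + 1)) n • A ^ j) := by
    intro n
    set C : ℝ := (α + n + 1) ^ n / n.factorial with hC_def
    have hfac : (0 : ℝ) < n.factorial := by exact_mod_cast n.factorial_pos
    have hb : ∀ j : ℕ, ‖kk (α * (j + 1)) n • A ^ j‖ ≤ C * (((j : ℝ) + 1) ^ n * r ^ j) := by
      intro j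
      have hβ : 0 < α * ((j : ℝ) + 1) := by positivity
      have hk0 : 0 ≤ kk (α * (j + 1)) n := (kk_pos hβ n).le
      have hns : ‖kk (α * ((j : ℝ) + 1)) n • A ^ j‖ ≤ kk (α * ((j : ℝ) + 1)) n * ‖A ^ j‖ := by
        have := norm_smul_le (kk (α * ((j : ℝ) + 1)) n) (A ^ j)
        rwa [Real.norm_eq_abs, abs_of_nonneg hk0] at this
      refine le_trans hns ?_
      have hj0 : (0 : ℝ) ≤ j := Nat.cast_nonneg j
      have hn0 : (0 : ℝ) ≤ n := Nat.cast_nonneg n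
      have h2 : kk (α * (j + 1)) n ≤ C * ((j : ℝ) + 1) ^ n := by
        rw [kk_eq_asc hβ]
        have l1 : (ascPochhammer ℝ n).eval (α * ((j : ℝ) + 1)) ≤ (α * ((j : ℝ) + 1) + n) ^ n :=
          asc_le hβ.le n
        have l2 : (α * ((j : ℝ) + 1) + n) ^ n ≤ ((α + n + 1) * ((j : ℝ) + 1)) ^ n := by
          apply pow_le_pow_left₀ (by positivity)
          nlinarith
        have l3 : (ascPochhammer ℝ n).eval (α * ((j : ℝ) + 1)) ≤
            ((α + n + 1) * ((j : ℝ) + 1)) ^ n := le_trans l1 l2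
        calc (ascPochhammer ℝ n).eval (α * ((j : ℝ) + 1)) / n.factorial
            ≤ ((α + n + 1) * ((j : ℝ) + 1)) ^ n / n.factorial := by
              exact div_le_div_of_nonneg_right l3 hfac.le
          _ = C * ((j : ℝ) + 1) ^ n := by rw [hC_def, mul_pow]; ring
      calc kk (α * (j + 1)) n * ‖A ^ j‖ ≤ (C * ((j : ℝ) + 1) ^ n) * r ^ j := by
            apply mul_le_mul h2 (hApow j) (norm_nonneg _)
            positivity
        _ = C * (((j : ℝ) + 1) ^ n * r ^ j) := by ring
    have hsn : Summable (fun j : ℕ => ‖kk (α * (j + 1)) n • A ^ j‖) :=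
      Summable.of_nonneg_of_le (fun _ => norm_nonneg _) hb ((hsum_geo n).mul_left C)
    exact hsn.of_norm
  refine ⟨Hop, fun n x => ?_⟩
  have Hpt : ∀ m : ℕ, ∀ y : X, Summable (fun j : ℕ => kk (α * (j + 1)) m • (A ^ j) y) := by
    intro m y
    have h := (Hop m).map (ContinuousLinearMap.apply ℝ X y)
      (ContinuousLinearMap.apply ℝ X y).continuous
    refine h.congr fun j => ?_
    simp [ContinuousLinearMap.apply]
  have happ : ∀ m : ℕ, ∀ y : X,
      (∑' j : ℕ, kk (α * (j + 1)) m • A ^ j) y =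
        ∑' j : ℕ, kk (α * (j + 1)) m • (A ^ j) y := by
    intro m y
    have h := (ContinuousLinearMap.apply ℝ X y).map_tsum (Hop m)
    simpa [ContinuousLinearMap.apply] using h
  -- the pointwise family at level n, summable, and mapped by A
  have HAmap : ∀ m : ℕ, Summable (fun i : ℕ => kk (α * (i + 1)) m • (A ^ (i + 1)) x) := by
    intro m
    have h := (Hpt m x).map A A.continuous
    refine h.congr fun i => ?_
    simp only [Function.comp_apply, map_smul]
    congr 1
    rw [pow_succ']
    rfl
  -- LHS
  rw [happ n x, Summable.tsum_eq_zero_add (Hpt n x)]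
  have hzero : kk (α * ((0 : ℕ) + 1)) n • (A ^ (0 : ℕ)) x = kk α n • x := by
    norm_num
  rw [hzero]
  congr 1
  -- RHS : compute A applied to the finite sum
  have hterm : ∀ j ∈ Finset.range (n + 1),
      (kk α (n - j) • (∑' i : ℕ, kk (α * (i + 1)) j • A ^ i) x) =
        kk α (n - j) • ∑' i : ℕ, kk (α * (i + 1)) j • (A ^ i) x := by
    intro j _
    rw [happ j x]
  rw [Finset.sum_congr rfl hterm, map_sum]
  have hterm2 : ∀ j ∈ Finset.range (n + 1),
      A (kk α (n - j) • ∑' i : ℕ, kk (α * (i + 1)) j • (A ^ i) x) =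
        ∑' i : ℕ, (kk α (n - j) * kk (α * (i + 1)) j) • (A ^ (i + 1)) x := by
    intro j _
    have hbody : ∀ z : ℕ, A (kk (α * (z + 1)) j • (A ^ z) x) =
        kk (α * (z + 1)) j • (A ^ (z + 1)) x := by
      intro z
      rw [map_smul]
      congr 1
      rw [pow_succ', ContinuousLinearMap.mul_apply]
    rw [map_smul, A.map_tsum (Hpt j x), tsum_congr hbody,
      ← Summable.tsum_const_smul (kk α (n - j)) (HAmap j)]
    exact tsum_congr fun i => (smul_smul _ _ _)
  rw [Finset.sum_congr rfl hterm2]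
  rw [← Summable.tsum_finsetSum (fun j _ => ((HAmap j).const_smul (kk α (n - j))).congr
      (fun i => (smul_smul _ _ _)))]
  refine tsum_congr fun i => ?_
  rw [← Finset.sum_smul, kk_conv hα (by positivity) n]
  congr 2
  push_cast
  ring
end

section
/- For α > 0, n ∈ ℕ, l ∈ ℕ₀, and |λ| < 1: ∑_{j=1}^n β_{α,n}(j)/(1-λ)^{j+1} = ∑_{l=0}^∞ λ^l Γ(α(l+1)+n)/(Γ(α(l+1))Γ(n+1)), where the coefficients β_{α,n}(j) are defined recursively by β_{α,1}(1)=k^α(1), β_{α,n}(1)=k^α(n)-∑_{j=1}^{n-1}k^α(n-j)β_{α,j}(1), β_{α,n}(l)=∑_{j=l-1}^{n-1}k^α(n-j)β_{α,j}(l-1)-∑_{j=l}^{n-1}k^α(n-j)β_{α,j}(l) for 2≤l≤n-1, and β_{α,n}(n)=α^n. -/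
/-- Table of the coefficients `β_{α,n}(l)` up to row `N`: `betaTab α N n l = β_{α,n}(l)`
for `n ≤ N` (values at `n > N` being irrelevant placeholders). -/
noncomputable def betaTab (α : ℝ) : ℕ → ℕ → ℕ → ℝ
  | 0 => fun _ _ => 0
  | N + 1 => fun n l =>
      if n ≤ N then betaTab α N n l
      else
        if l = n then α ^ n
        else if l = 1 then
          kk α n - ∑ j ∈ Finset.Icc 1 (n - 1), kk α (n - j) * betaTab α N j 1
        else
          (∑ j ∈ Finset.Icc (l - 1) (n - 1), kk α (n - j) * betaTab α N j (l - 1)) -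
            ∑ j ∈ Finset.Icc l (n - 1), kk α (n - j) * betaTab α N j l

/-- The coefficients `β_{α,n}(l)` defined recursively. -/
noncomputable def betaC (α : ℝ) (n l : ℕ) : ℝ := betaTab α n n l

open Finset

noncomputable def kp (β : ℝ) (n : ℕ) : ℝ :=
  (∏ i ∈ range n, (β + i)) / n.factorial

lemma kp_zero (β : ℝ) : kp β 0 = 1 := by simp [kp]

lemma kp_succ (β : ℝ) (n : ℕ) :
    kp β (n + 1) * (n + 1) = kp β n * (β + n) := by
  have h1 : (n.factorial : ℝ) ≠ 0 := by positivity
  have h2 : ((n+1).factorial : ℝ) ≠ 0 := by positivity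
  simp only [kp, prod_range_succ, Nat.factorial_succ, Nat.cast_mul, Nat.cast_succ]
  field_simp

lemma Gamma_add_nat (β : ℝ) (hβ : 0 < β) (n : ℕ) :
    Real.Gamma (β + n) = Real.Gamma β * ∏ i ∈ range n, (β + i) := by
  induction n with
  | zero => simp
  | succ n ih =>
    have hne : β + n ≠ 0 := by positivity
    have : β + (n + 1 : ℕ) = (β + n) + 1 := by push_cast; ring
    rw [this, Real.Gamma_add_one hne, ih, prod_range_succ]
    ring

lemma kk_eq_kp (β : ℝ) (hβ : 0 < β) (n : ℕ) : kk β n = kp β n := by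
  have h0 : Real.Gamma β ≠ 0 := (Real.Gamma_pos_of_pos hβ).ne'
  rw [kk, kp, Gamma_add_nat β hβ, Real.Gamma_nat_eq_factorial]
  have : ((n+1) - 1).factorial = n.factorial := by simp
  rw [mul_div_mul_left _ _ h0]

lemma kp_pascal (x : ℝ) (j : ℕ) :
    kp (x + 1) (j + 1) = kp x (j + 1) + kp (x + 1) j := by
  have h2 : ((j+1).factorial : ℝ) ≠ 0 := by positivity
  have h1 : (j.factorial : ℝ) ≠ 0 := by positivity
  have key : (∏ i ∈ range (j+1), (x + 1 + i)) =
      (∏ i ∈ range (j+1), (x + i)) + (j+1) * ∏ i ∈ range j, (x + 1 + i) := by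
    have l1 : (∏ i ∈ range (j+1), (x + 1 + i)) = (∏ i ∈ range j, (x + 1 + i)) * (x + 1 + j) := by
      rw [prod_range_succ]
    have l2 : (∏ i ∈ range (j+1), (x + i)) = x * ∏ i ∈ range j, (x + 1 + i) := by
      rw [prod_range_succ']
      simp only [Nat.cast_zero, add_zero]
      rw [mul_comm]
      congr 1
      apply prod_congr rfl
      intro i _
      push_cast; ring
    rw [l1, l2]; ring
  rw [kp, kp, kp, key, Nat.factorial_succ]
  push_cast
  field_simp

lemma prod_asc (l j : ℕ) : (∏ i ∈ range j, ((l:ℝ) + 1 + i)) = ((l+1).ascFactorial j : ℝ) := by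
  induction j with
  | zero => simp
  | succ j ih =>
    rw [prod_range_succ, ih, Nat.ascFactorial_succ]
    push_cast; ring

lemma kp_nat_choose (l j : ℕ) : kp ((l : ℝ) + 1) j = ((l + j).choose j : ℝ) := by
  have h1 : (j.factorial : ℝ) ≠ 0 := by positivity
  rw [kp, div_eq_iff h1]
  have := prod_asc l j
  rw [this, Nat.ascFactorial_eq_factorial_mul_choose]
  push_cast; ring

lemma kp_conv (a b : ℝ) (n : ℕ) :
    ∑ i ∈ range (n+1), kp a i * kp b (n - i) = kp (a+b) n := by
  induction n with
  | zero => simp [kp_zero]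
  | succ n ih =>
    have hn1 : ((n:ℝ) + 1) ≠ 0 := by positivity
    have key : (∑ i ∈ range (n+2), kp a i * kp b (n+1-i)) * ((n:ℝ)+1) =
        (∑ i ∈ range (n+1), kp a i * kp b (n-i)) * (a + b + n) := by
      have stepA : (∑ i ∈ range (n+2), kp a i * kp b (n+1-i)) * ((n:ℝ)+1) =
          (∑ i ∈ range (n+1), (kp a i * (a+i)) * kp b (n-i))
          + ∑ i ∈ range (n+1), kp a i * (kp b (n-i) * (b + ((n-i : ℕ):ℝ))) := by
        rw [sum_mul]
        have expand : ∀ i ∈ range (n+2),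
            kp a i * kp b (n+1-i) * ((n:ℝ)+1) =
            (i:ℝ) * (kp a i * kp b (n+1-i)) + ((n:ℝ)+1-i) * (kp a i * kp b (n+1-i)) := by
          intro i _; ring
        rw [sum_congr rfl expand, sum_add_distrib]
        congr 1
        · rw [sum_range_succ']
          simp only [Nat.cast_zero, zero_mul, add_zero]
          apply sum_congr rfl
          intro i hi
          have hsub : n + 1 - (i+1) = n - i := by omega
          rw [hsub]
          push_cast
          have h := kp_succ a i
          linear_combination kp b (n - i) * h
        · rw [sum_range_succ]
          have : ((n:ℝ)+1-((n+1:ℕ):ℝ)) = 0 := by push_cast; ring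
          push_cast at this ⊢
          rw [show ((n:ℝ)+1-((n:ℝ)+1)) = 0 by ring, zero_mul, add_zero]
          apply sum_congr rfl
          intro i hi
          have hile : i ≤ n := by simp at hi; omega
          have hsub : n + 1 - i = (n - i) + 1 := by omega
          have hcast : ((n - i : ℕ):ℝ) = (n:ℝ) - i := by
            rw [Nat.cast_sub hile]
          rw [hsub]
          have hs := kp_succ b (n-i)
          have : kp b (n-i+1) * (((n-i:ℕ):ℝ)+1) = kp b (n-i) * (b + ((n-i:ℕ):ℝ)) := hs
          rw [hcast] at this
          rw [hcast]
          linear_combination kp a i * this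
      rw [stepA, ← sum_add_distrib, sum_mul]
      apply sum_congr rfl
      intro i hi
      have hile : i ≤ n := by simp at hi; omega
      have hcast : ((n - i : ℕ):ℝ) = (n:ℝ) - i := Nat.cast_sub hile
      rw [hcast]; ring
    have goal' : (∑ i ∈ range (n+2), kp a i * kp b (n+1-i)) * ((n:ℝ)+1) =
        kp (a+b) (n+1) * ((n:ℝ)+1) := by
      rw [key, ih]
      have h := kp_succ (a+b) n
      linear_combination -h
    have := mul_right_cancel₀ hn1 goal'
    simpa using this

lemma betaTab_stable (α : ℝ) (N n l : ℕ) (h : n ≤ N) : betaTab α N n l = betaC α n l := by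
  induction N with
  | zero =>
    interval_cases n
    rfl
  | succ N ih =>
    rcases Nat.lt_or_ge n (N+1) with h' | h'
    · have hn : n ≤ N := by omega
      rw [betaTab]
      simp only [hn, if_true]
      exact ih hn
    · have : n = N + 1 := by omega
      subst this
      rfl

lemma betaC_zero_row (α : ℝ) (l : ℕ) : betaC α 0 l = 0 := rfl

lemma betaC_diag (α : ℝ) (n : ℕ) (hn : 1 ≤ n) : betaC α n n = α ^ n := by
  obtain ⟨N, rfl⟩ : ∃ N, n = N + 1 := ⟨n - 1, by omega⟩
  rw [betaC, betaTab]
  simp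

lemma betaC_one (α : ℝ) (n : ℕ) (hn : 2 ≤ n) :
    betaC α n 1 = kk α n - ∑ j ∈ Finset.Icc 1 (n-1), kk α (n-j) * betaC α j 1 := by
  obtain ⟨N, rfl⟩ : ∃ N, n = N + 1 := ⟨n - 1, by omega⟩
  rw [betaC, betaTab]
  have h1 : ¬ (N + 1 ≤ N) := by omega
  have h2 : (1 : ℕ) ≠ N + 1 := by omega
  simp only [h1, if_false, h2, if_true, if_neg]
  congr 1
  apply sum_congr rfl
  intro j hj
  simp only [mem_Icc] at hj
  rw [betaTab_stable α N j 1 (by omega)]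

lemma betaC_mid (α : ℝ) (n l : ℕ) (hn : 1 ≤ n) (h1 : l ≠ 1) (h2 : l ≠ n) :
    betaC α n l = (∑ j ∈ Finset.Icc (l-1) (n-1), kk α (n-j) * betaC α j (l-1)) -
      ∑ j ∈ Finset.Icc l (n-1), kk α (n-j) * betaC α j l := by
  obtain ⟨N, rfl⟩ : ∃ N, n = N + 1 := ⟨n - 1, by omega⟩
  rw [betaC, betaTab]
  have hle : ¬ (N + 1 ≤ N) := by omega
  simp only [hle, if_false, h2, h1, if_neg]
  congr 1
  · apply sum_congr rfl
    intro j hj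
    simp only [mem_Icc] at hj
    rw [betaTab_stable α N j (l-1) (by omega)]
  · apply sum_congr rfl
    intro j hj
    simp only [mem_Icc] at hj
    rw [betaTab_stable α N j l (by omega)]

lemma betaC_l_zero (α : ℝ) (n : ℕ) (hn : 1 ≤ n) : betaC α n 0 = 0 := by
  rw [betaC_mid α n 0 hn (by omega) (by omega)]
  simp

lemma betaC_hi (α : ℝ) (n l : ℕ) (hn : 1 ≤ n) (hl : n < l) : betaC α n l = 0 := by
  rw [betaC_mid α n l hn (by omega) (by omega)]
  rw [Finset.Icc_eq_empty (by omega), Finset.Icc_eq_empty (by omega)]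
  simp

noncomputable def AA (α : ℝ) (n j : ℕ) : ℝ := ∑ i ∈ range n, kp α (n - i) * betaC α i j

lemma betaC_lt (α : ℝ) (i j : ℕ) (h : i < j) : betaC α i j = 0 := by
  rcases Nat.eq_zero_or_pos i with hi | hi
  · subst hi; exact betaC_zero_row α j
  · exact betaC_hi α i j hi h

lemma AA_eq_Icc (α : ℝ) (hα : 0 < α) (n j : ℕ) (hj : 1 ≤ j) :
    AA α n j = ∑ i ∈ Finset.Icc j (n-1), kk α (n-i) * betaC α i j := by
  rw [AA]
  rw [← Finset.sum_subset (h := fun x hx => ?_) (hf := fun x hx hx' => ?_)]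
  · apply sum_congr rfl
    intro i hi
    rw [kk_eq_kp α hα]
  · simp only [mem_Icc, mem_range] at hx ⊢
    omega
  · simp only [mem_Icc, mem_range] at hx hx'
    rw [betaC_lt α x j (by omega), mul_zero]

lemma AA_ge (α : ℝ) (n j : ℕ) (hj : n ≤ j) : AA α n j = 0 := by
  rw [AA]
  apply Finset.sum_eq_zero
  intro i hi
  simp only [mem_range] at hi
  rw [betaC_lt α i j (by omega), mul_zero]

lemma betaC_one' (α : ℝ) (hα : 0 < α) (n : ℕ) (hn : 1 ≤ n) :
    betaC α n 1 = kp α n - AA α n 1 := by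
  rcases Nat.lt_or_ge n 2 with h | h
  · have : n = 1 := by omega
    subst this
    rw [betaC_diag α 1 le_rfl, AA]
    simp [betaC_zero_row, kp, pow_one]
  · rw [betaC_one α n h, AA_eq_Icc α hα n 1 le_rfl, kk_eq_kp α hα]

lemma betaC_succ' (α : ℝ) (hα : 0 < α) (n j : ℕ) (hj : 1 ≤ j) (hjn : j ≤ n - 1) (hn : 2 ≤ n) :
    betaC α n (j+1) = AA α n j - AA α n (j+1) := by
  rcases Nat.lt_or_ge (j+1) n with h | h
  · rw [betaC_mid α n (j+1) (by omega) (by omega) (by omega)]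
    rw [AA_eq_Icc α hα n j hj, AA_eq_Icc α hα n (j+1) (by omega)]
    simp
  · have hjeq : j + 1 = n := by omega
    have hj' : j = n - 1 := by omega
    rw [hjeq, betaC_diag α n (by omega), AA_ge α n n le_rfl, sub_zero, hj',
      AA_eq_Icc α hα n (n-1) (by omega)]
    rw [Finset.Icc_self, Finset.sum_singleton]
    have h1 : n - (n-1) = 1 := by omega
    rw [h1, kk_eq_kp α hα, betaC_diag α (n-1) (by omega)]
    have : kp α 1 = α := by simp [kp]
    rw [this, ← pow_succ']
    congr 1
    omega

lemma kp_one (j : ℕ) : kp (1:ℝ) j = 1 := by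
  have := kp_nat_choose 0 j
  simpa using this

lemma row_sum (α : ℝ) (hα : 0 < α) (n : ℕ) (hn : 1 ≤ n) :
    ∑ j ∈ range n, betaC α n (j+1) = kp α n := by
  obtain ⟨n', rfl⟩ : ∃ n', n = n' + 1 := ⟨n - 1, by omega⟩
  rw [Finset.sum_range_succ']
  rcases Nat.eq_zero_or_pos n' with h | h
  · subst h
    simp [betaC_one' α hα 1 le_rfl, AA, betaC_zero_row]
  · have hn2 : 2 ≤ n' + 1 := by omega
    have step : ∀ j ∈ range n', betaC α (n'+1) (j+1+1) =
        AA α (n'+1) (j+1) - AA α (n'+1) (j+2) := by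
      intro j hj
      simp only [mem_range] at hj
      exact betaC_succ' α hα (n'+1) (j+1) (by omega) (by omega) hn2
    rw [Finset.sum_congr rfl step]
    have tel : ∑ j ∈ range n', (AA α (n'+1) (j+1) - AA α (n'+1) (j+2)) =
        AA α (n'+1) 1 - AA α (n'+1) (n'+1) :=
      Finset.sum_range_sub' (fun i => AA α (n'+1) (i+1)) n'
    rw [tel, AA_ge α (n'+1) (n'+1) le_rfl, sub_zero,
      betaC_one' α hα (n'+1) (by omega)]
    ring

lemma star (α : ℝ) (hα : 0 < α) : ∀ n, 1 ≤ n → ∀ m : ℕ, 1 ≤ m →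
    kp (α * m) n = ∑ j ∈ range n, betaC α n (j+1) * kp (m : ℝ) (j+1) := by
  intro n
  induction n using Nat.strong_induction_on with
  | _ n IH =>
    intro hn m
    induction m with
    | zero => omega
    | succ m IHm =>
      intro _
      rcases Nat.eq_zero_or_pos m with hm0 | hm1
      · -- base case m + 1 = 1
        subst hm0
        simp only [Nat.cast_one, mul_one, Nat.cast_zero, zero_add]
        rw [Finset.sum_congr rfl (fun j _ => by rw [kp_one, mul_one]),
          row_sum α hα n hn]
      · -- inductive step
        obtain ⟨n', rfl⟩ : ∃ n', n = n' + 1 := ⟨n - 1, by omega⟩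
        have IHm' := IHm hm1
        have conv := kp_conv (α * m) α (n'+1)
        have hcast : α * ((m+1 : ℕ) : ℝ) = α * m + α := by push_cast; ring
        rw [hcast, ← conv]
        -- expand the convolution sum
        rw [Finset.sum_range_succ, Finset.sum_range_succ']
        have hsub0 : n' + 1 - (n'+1) = 0 := by omega
        rw [hsub0]
        simp only [kp_zero, mul_one, one_mul, Nat.sub_zero]
        -- middle sum
        have mid : ∀ i ∈ range n', kp (α * ↑m) (i+1) * kp α (n' + 1 - (i+1)) =
            (∑ j ∈ range n', kp α (n' - i) * (betaC α (i+1) (j+1) * kp (m:ℝ) (j+1))) := by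
          intro i hi
          simp only [mem_range] at hi
          rw [IH (i+1) (by omega) (by omega) m hm1]
          have : n' + 1 - (i+1) = n' - i := by omega
          rw [this, Finset.sum_mul,
            Finset.sum_subset (Finset.range_subset_range.2 (by omega : i + 1 ≤ n'))
              (fun x hx hx' => by
                simp only [mem_range] at hx hx'
                rw [betaC_lt α (i+1) (x+1) (by omega), zero_mul, zero_mul])]
          apply sum_congr rfl; intro j hj; ring
        rw [Finset.sum_congr rfl mid, Finset.sum_comm]
        have inner : ∀ j ∈ range n',
            (∑ i ∈ range n', kp α (n' - i) * (betaC α (i+1) (j+1) * kp (m:ℝ) (j+1))) =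
            AA α (n'+1) (j+1) * kp (m:ℝ) (j+1) := by
          intro j hj
          rw [AA, Finset.sum_range_succ', betaC_zero_row, mul_zero, add_zero, sum_mul]
          apply sum_congr rfl
          intro i hi
          have : n' + 1 - (i+1) = n' - i := by omega
          rw [this]; ring
        rw [Finset.sum_congr rfl inner, IHm']
        -- now prove E1 = target
        have pascal : ∀ j : ℕ, kp ((m:ℝ)+1) (j+1) = kp (m:ℝ) (j+1) + kp ((m:ℝ)+1) j :=
          fun j => kp_pascal (m:ℝ) j
        have hcast2 : ((m + 1 : ℕ) : ℝ) = (m:ℝ) + 1 := by push_cast; ring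
        rw [hcast2]
        have target_split : ∑ j ∈ range (n'+1), betaC α (n'+1) (j+1) * kp ((m:ℝ)+1) (j+1) =
            (∑ j ∈ range (n'+1), betaC α (n'+1) (j+1) * kp (m:ℝ) (j+1)) +
            ∑ j ∈ range (n'+1), betaC α (n'+1) (j+1) * kp ((m:ℝ)+1) j := by
          rw [← Finset.sum_add_distrib]
          apply sum_congr rfl
          intro j hj
          rw [pascal j]; ring
        rw [target_split]
        -- remains: E2
        have E2 : kp α (n'+1) + ∑ j ∈ range n', AA α (n'+1) (j+1) * kp (m:ℝ) (j+1) =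
            ∑ j ∈ range (n'+1), betaC α (n'+1) (j+1) * kp ((m:ℝ)+1) j := by
          have pas2 : ∀ j ∈ range n', AA α (n'+1) (j+1) * kp (m:ℝ) (j+1) =
              AA α (n'+1) (j+1) * kp ((m:ℝ)+1) (j+1) - AA α (n'+1) (j+1) * kp ((m:ℝ)+1) j := by
            intro j hj
            rw [pascal j]; ring
          rw [Finset.sum_congr rfl pas2, Finset.sum_sub_distrib]
          rw [Finset.sum_range_succ' (fun j => betaC α (n'+1) (j+1) * kp ((m:ℝ)+1) j) n']
          simp only [kp_zero, mul_one]
          rcases Nat.eq_zero_or_pos n' with h0 | h0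
          · subst h0
            simp only [range_zero, sum_empty, add_zero, sub_zero, zero_add]
            rw [betaC_one' α hα 1 le_rfl]
            have : AA α 1 1 = 0 := by
              rw [AA]; simp [betaC_zero_row]
            rw [this]; ring
          · have hn2 : 2 ≤ n' + 1 := by omega
            have bsucc : ∀ j ∈ range n', betaC α (n'+1) (j+1+1) * kp ((m:ℝ)+1) (j+1) =
                (AA α (n'+1) (j+1) - AA α (n'+1) (j+2)) * kp ((m:ℝ)+1) (j+1) := by
              intro j hj
              simp only [mem_range] at hj
              rw [betaC_succ' α hα (n'+1) (j+1) (by omega) (by omega) hn2]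
            rw [Finset.sum_congr rfl bsucc, betaC_one' α hα (n'+1) (by omega)]
            -- telescoping-ish rearrangement
            have shift : ∑ j ∈ range n', AA α (n'+1) (j+2) * kp ((m:ℝ)+1) (j+1) =
                (∑ j ∈ range n', AA α (n'+1) (j+1) * kp ((m:ℝ)+1) j) - AA α (n'+1) 1 * kp ((m:ℝ)+1) 0
                + AA α (n'+1) (n'+1) * kp ((m:ℝ)+1) n' := by
              have e1 := Finset.sum_range_succ' (fun j => AA α (n'+1) (j+1) * kp ((m:ℝ)+1) j) n'
              have e2 := Finset.sum_range_succ (fun j => AA α (n'+1) (j+1) * kp ((m:ℝ)+1) j) n'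
              simp only [show ∀ x : ℕ, x + 1 + 1 = x + 2 from fun _ => rfl] at e1 e2
              linarith [e1, e2]
            rw [show (∑ j ∈ range n', (AA α (n'+1) (j+1) - AA α (n'+1) (j+2)) * kp ((m:ℝ)+1) (j+1)) =
                (∑ j ∈ range n', AA α (n'+1) (j+1) * kp ((m:ℝ)+1) (j+1)) -
                ∑ j ∈ range n', AA α (n'+1) (j+2) * kp ((m:ℝ)+1) (j+1) by
              rw [← Finset.sum_sub_distrib]; apply sum_congr rfl; intro j hj; ring]
            rw [shift, AA_ge α (n'+1) (n'+1) le_rfl, kp_zero]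
            ring
        linarith [E2]

theorem stmt19 (α : ℝ) (hα : 0 < α) (n : ℕ) (hn : 1 ≤ n) (lam : ℂ) (hlam : ‖lam‖ < 1) :
    ∑ j ∈ Finset.Icc 1 n, (betaC α n j : ℂ) / (1 - lam) ^ (j + 1) =
      ∑' l : ℕ,
        lam ^ l *
          ((Real.Gamma (α * (l + 1) + n) /
              (Real.Gamma (α * (l + 1)) * n.factorial) : ℝ) : ℂ) := by
  have hterm : ∀ l : ℕ, ((Real.Gamma (α * (l + 1) + n) /
      (Real.Gamma (α * (l + 1)) * n.factorial) : ℝ) : ℂ)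
      = ∑ j ∈ range n, (betaC α n (j+1) : ℂ) * (((l + (j+1)).choose (j+1) : ℕ) : ℂ) := by
    intro l
    have hb : (0:ℝ) < α * ((l:ℝ) + 1) := by positivity
    have hΓ : Real.Gamma (α * ((l:ℝ)+1)) ≠ 0 := (Real.Gamma_pos_of_pos hb).ne'
    have e1 : Real.Gamma (α * ((l:ℝ)+1) + n) / (Real.Gamma (α * ((l:ℝ)+1)) * n.factorial)
        = kp (α * ((l:ℝ)+1)) n := by
      rw [Gamma_add_nat _ hb, kp, mul_div_mul_left _ _ hΓ]
    have e2 : kp (α * ((l:ℝ)+1)) n = ∑ j ∈ range n, betaC α n (j+1) * kp ((l:ℝ)+1) (j+1) := by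
      have := star α hα n hn (l+1) (by omega)
      push_cast at this
      exact this
    have e3 : ∀ j, kp ((l:ℝ)+1) (j+1) = (((l + (j+1)).choose (j+1) : ℕ) : ℝ) :=
      fun j => kp_nat_choose l (j+1)
    rw [e1, e2, Finset.sum_congr rfl (fun j _ => by rw [e3 j])]
    push_cast
    rfl
  have hrw : (∑' l : ℕ, lam ^ l * ((Real.Gamma (α * (l + 1) + n) /
      (Real.Gamma (α * (l + 1)) * n.factorial) : ℝ) : ℂ))
      = ∑' l : ℕ, ∑ j ∈ range n, (betaC α n (j+1) : ℂ) *
          ((((l + (j+1)).choose (j+1) : ℕ) : ℂ) * lam ^ l) := by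
    apply tsum_congr
    intro l
    rw [hterm l, Finset.mul_sum]
    apply sum_congr rfl
    intro j _
    ring
  rw [hrw, Summable.tsum_finsetSum (fun j _ => ((summable_choose_mul_geometric_of_norm_lt_one (j+1) hlam).mul_left
    ((betaC α n (j+1) : ℂ))))]
  have htsum : ∀ j, (∑' l : ℕ, (betaC α n (j+1) : ℂ) *
      ((((l + (j+1)).choose (j+1) : ℕ) : ℂ) * lam ^ l))
      = (betaC α n (j+1) : ℂ) / (1 - lam) ^ (j + 2) := by
    intro j
    rw [tsum_mul_left, tsum_choose_mul_geometric_of_norm_lt_one (j+1) hlam]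
    rw [mul_one_div]
  rw [Finset.sum_congr rfl (fun j _ => htsum j)]
  rw [← Finset.Ico_add_one_right_eq_Icc, Finset.sum_Ico_eq_sum_range]
  have : n + 1 - 1 = n := by omega
  rw [this]
  apply sum_congr rfl
  intro i _
  have h1 : 1 + i = i + 1 := by omega
  rw [h1]
end
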